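/- For the 2-leg spider with span bounded by s≥2 on ℤ with rates q(x,x+1)=p, q(x,x−1)=q, the distance between the two legs under the jump chain of the spider is a Markov chain on {1,…,s}, namely the simple random walk reflected at 1 and s (from 1 it moves to 2 with probability 1, from s to s−1 with probability 1, and from interior states to each neighbour with probability 1/2), and its unique stationary distribution Π is given by Π(1)=Π(s)=1/(2s−2) and Π(i)=1/(s−1) for 1<i<s. -/

import Mathlib

set_option linter.all false


open scoped ENNReal

/- STATEMENT 14: For the 2-leg spider with span s on ℤ (rates p up, q down), the
leg-distance process under the jump chain of the spider is a Markov chain on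
{1,…,s}: the simple random walk reflected at 1 and s; its unique stationary
distribution is Π(1)=Π(s)=1/(2s-2), Π(i)=1/(s-1) for 1<i<s. -/

/-- Configurations of the 2-leg spider with span bounded by `s` on ℤ. -/
def Sp (s : ℕ) : Type := {c : ℤ × ℤ // c.1 ≠ c.2 ∧ (c.1 - c.2).natAbs ≤ s}

/-- Rates of the underlying walk on ℤ. -/
noncomputable def qZ (p q : ℝ) (x y : ℤ) : ℝ≥0∞ :=
  if y = x + 1 then ENNReal.ofReal p else if y = x - 1 then ENNReal.ofReal q else 0

open Classical in
/-- Spider rates: exactly one leg moves, with the rate of the underlying walk;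
moves violating the constraints (encoded in `Sp s`) are suppressed. -/
noncomputable def spRate (p q : ℝ) {s : ℕ} (c d : Sp s) : ℝ≥0∞ :=
  (if c.1.2 = d.1.2 ∧ c.1.1 ≠ d.1.1 then qZ p q c.1.1 d.1.1 else 0) +
  (if c.1.1 = d.1.1 ∧ c.1.2 ≠ d.1.2 then qZ p q c.1.2 d.1.2 else 0)

/-- Jump chain of a continuous-time chain with rates `q`. -/
noncomputable def jumpChain {S : Type*} (q : S → S → ℝ≥0∞) : S → S → ℝ≥0∞ :=
  fun x y => q x y / ∑' z, q x z

/-- The distance between the two legs of a configuration. -/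
def legDist {s : ℕ} (c : Sp s) : ℕ := (c.1.1 - c.1.2).natAbs

open Classical in
/-- The kernel of the simple random walk on {1,…,s} reflected at 1 and s. -/
noncomputable def reflK (s : ℕ) (i j : ℕ) : ℝ :=
  if i = 1 then (if j = 2 then 1 else 0)
  else if i = s then (if j = s - 1 then 1 else 0)
  else if 1 < i ∧ i < s then (if j = i + 1 ∨ j = i - 1 then 1 / 2 else 0)
  else 0

open Classical in
/-- The claimed stationary distribution. -/
noncomputable def piDist (s : ℕ) (i : ℕ) : ℝ :=
  if i = 1 ∨ i = s then 1 / (2 * (s : ℝ) - 2)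
  else if 1 < i ∧ i < s then 1 / ((s : ℝ) - 1)
  else 0

lemma tsum_four (s : ℕ) (x1 x2 : ℤ) (F : ℤ × ℤ → ℝ≥0∞)
    (hF : ∀ z, z ∉ ({(x1+1,x2),(x1-1,x2),(x1,x2+1),(x1,x2-1)} : Finset (ℤ×ℤ)) → F z = 0)
    (hF0 : ∀ z : ℤ×ℤ, ¬(z.1 ≠ z.2 ∧ (z.1-z.2).natAbs ≤ s) → F z = 0) :
    ∑' d : Sp s, F d.1 = F (x1+1,x2) + F (x1-1,x2) + F (x1,x2+1) + F (x1,x2-1) := by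
  have h1 : ∑' d : Sp s, F d.1
      = ∑' z : ℤ×ℤ, Set.indicator {z : ℤ×ℤ | z.1 ≠ z.2 ∧ (z.1 - z.2).natAbs ≤ s} F z :=
    tsum_subtype {z : ℤ×ℤ | z.1 ≠ z.2 ∧ (z.1 - z.2).natAbs ≤ s} F
  have h2 : Set.indicator {z : ℤ×ℤ | z.1 ≠ z.2 ∧ (z.1 - z.2).natAbs ≤ s} F = F := by
    apply Set.indicator_eq_self.2
    intro z hz
    by_contra hmem
    exact hz (hF0 z hmem)
  rw [h1, h2, tsum_eq_sum hF]
  have d1 : ((x1+1,x2) : ℤ×ℤ) ∉ ({(x1-1,x2),(x1,x2+1),(x1,x2-1)} : Finset (ℤ×ℤ)) := by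
    simp [Prod.ext_iff] <;> omega
  have d2 : ((x1-1,x2) : ℤ×ℤ) ∉ ({(x1,x2+1),(x1,x2-1)} : Finset (ℤ×ℤ)) := by
    simp [Prod.ext_iff] <;> omega
  have d3 : ((x1,x2+1) : ℤ×ℤ) ∉ ({(x1,x2-1)} : Finset (ℤ×ℤ)) := by
    simp [Prod.ext_iff] <;> omega
  rw [show ({(x1+1,x2),(x1-1,x2),(x1,x2+1),(x1,x2-1)} : Finset (ℤ×ℤ))
      = insert (x1+1,x2) (insert (x1-1,x2) (insert (x1,x2+1) {(x1,x2-1)})) from rfl,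
    Finset.sum_insert d1, Finset.sum_insert d2, Finset.sum_insert d3, Finset.sum_singleton]
  ring

lemma G_support (p q : ℝ) (x1 x2 : ℤ) (z : ℤ×ℤ)
    (hz : z ∉ ({(x1+1,x2),(x1-1,x2),(x1,x2+1),(x1,x2-1)} : Finset (ℤ×ℤ))) :
    (if x2 = z.2 ∧ x1 ≠ z.1 then qZ p q x1 z.1 else 0)
      + (if x1 = z.1 ∧ x2 ≠ z.2 then qZ p q x2 z.2 else 0) = 0 := by
  obtain ⟨z1, z2⟩ := z
  simp only [Finset.mem_insert, Finset.mem_singleton, Prod.mk.injEq] at hz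
  unfold qZ
  split_ifs <;> first | rfl | (exfalso; omega) | (simp_all <;> omega)
lemma reflK_one_eq' (s j : ℕ) (h : j = 2) : reflK s 1 j = 1 := by
  unfold reflK; rw [if_pos rfl, if_pos h]
lemma reflK_one_ne' (s j : ℕ) (h : j ≠ 2) : reflK s 1 j = 0 := by
  unfold reflK; rw [if_pos rfl, if_neg h]
lemma reflK_top_eq' (s j : ℕ) (hs : 2 ≤ s) (h : j = s - 1) : reflK s s j = 1 := by
  unfold reflK; rw [if_neg (by omega), if_pos rfl, if_pos h]
lemma reflK_top_ne' (s j : ℕ) (hs : 2 ≤ s) (h : j ≠ s - 1) : reflK s s j = 0 := by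
  unfold reflK; rw [if_neg (by omega), if_pos rfl, if_neg h]
lemma reflK_mid_eq' (s i j : ℕ) (h1 : 1 < i) (h2 : i < s) (h : j = i + 1 ∨ j = i - 1) :
    reflK s i j = 1 / 2 := by
  unfold reflK; rw [if_neg (by omega), if_neg (by omega), if_pos ⟨h1, h2⟩, if_pos h]
lemma reflK_mid_ne' (s i j : ℕ) (h1 : 1 < i) (h2 : i < s) (h : ¬(j = i + 1 ∨ j = i - 1)) :
    reflK s i j = 0 := by
  unfold reflK; rw [if_neg (by omega), if_neg (by omega), if_pos ⟨h1, h2⟩, if_neg h]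

lemma ENN_one (a : ℝ≥0∞) (h0 : a ≠ 0) (ht : a ≠ ⊤) : a / a = ENNReal.ofReal 1 := by
  rw [ENNReal.div_self h0 ht, ENNReal.ofReal_one]

lemma ENN_half (a : ℝ≥0∞) (h0 : a ≠ 0) (ht : a ≠ ⊤) : a / (a + a) = ENNReal.ofReal (1/2) := by
  have e1 : a / (a + a) = (a * 1) / (a * 2) := by rw [mul_one, mul_two]
  rw [e1, ENNReal.mul_div_mul_left 1 2 h0 ht,
    ENNReal.ofReal_div_of_pos (by norm_num), ENNReal.ofReal_one, ENNReal.ofReal_ofNat]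

lemma key (P Q : ℝ≥0∞) (hP0 : P ≠ 0) (hPt : P ≠ ⊤) (hQ0 : Q ≠ 0) (hQt : Q ≠ ⊤)
    (s n l' : ℕ) (h1 : 1 ≤ n) (hns : n ≤ s) (hs : 2 ≤ s) :
    ((if n+1 ≤ s ∧ l' = n+1 then P+Q else 0) + (if 2 ≤ n ∧ l' = n-1 then P+Q else 0)) /
    ((if n+1 ≤ s then P+Q else 0) + (if 2 ≤ n then P+Q else 0))
      = ENNReal.ofReal (reflK s n l') := by
  have hPQ0 : P + Q ≠ 0 := by simp [hP0, hQ0]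
  have hPQt : P + Q ≠ ⊤ := by simp [hPt, hQt]
  by_cases hn1 : n = 1
  · subst hn1
    rw [if_neg (show ¬(2 ≤ 1 ∧ l' = 1 - 1) by omega), add_zero,
      if_pos (show 1+1 ≤ s by omega), if_neg (show ¬(2 ≤ 1) by omega), add_zero]
    by_cases hl : l' = 2
    · rw [if_pos (show 1+1 ≤ s ∧ l' = 1+1 by omega), ENN_one _ hPQ0 hPQt,
        reflK_one_eq' s l' hl]
    · rw [if_neg (show ¬(1+1 ≤ s ∧ l' = 1+1) by omega), ENNReal.zero_div,
        reflK_one_ne' s l' hl, ENNReal.ofReal_zero]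
  · by_cases hns' : n = s
    · subst hns'
      rw [if_neg (show ¬(n+1 ≤ n ∧ l' = n+1) by omega), zero_add,
        if_neg (show ¬(n+1 ≤ n) by omega), zero_add, if_pos (show 2 ≤ n by omega)]
      by_cases hl : l' = n - 1
      · rw [if_pos (show 2 ≤ n ∧ l' = n - 1 by omega), ENN_one _ hPQ0 hPQt,
          reflK_top_eq' n l' hs hl]
      · rw [if_neg (show ¬(2 ≤ n ∧ l' = n - 1) by omega), ENNReal.zero_div,
          reflK_top_ne' n l' hs hl, ENNReal.ofReal_zero]
    · -- 1 < n < s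
      have hn2 : 2 ≤ n := by omega
      have hnlt : n < s := by omega
      rw [if_pos (show n+1 ≤ s by omega), if_pos hn2]
      by_cases hl1 : l' = n + 1
      · rw [if_pos (show n+1 ≤ s ∧ l' = n+1 by omega),
          if_neg (show ¬(2 ≤ n ∧ l' = n - 1) by omega), add_zero, ENN_half _ hPQ0 hPQt,
          reflK_mid_eq' s n l' (by omega) hnlt (Or.inl hl1)]
      · by_cases hl2 : l' = n - 1
        · rw [if_neg (show ¬(n+1 ≤ s ∧ l' = n+1) by omega),
            if_pos (show 2 ≤ n ∧ l' = n - 1 by omega), zero_add, ENN_half _ hPQ0 hPQt,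
            reflK_mid_eq' s n l' (by omega) hnlt (Or.inr hl2)]
        · rw [if_neg (show ¬(n+1 ≤ s ∧ l' = n+1) by omega),
            if_neg (show ¬(2 ≤ n ∧ l' = n - 1) by omega), add_zero, ENNReal.zero_div,
            reflK_mid_ne' s n l' (by omega) hnlt (by omega), ENNReal.ofReal_zero]
open Classical in
noncomputable def Gf (p q : ℝ) (x1 x2 : ℤ) (z : ℤ×ℤ) : ℝ≥0∞ :=
  (if x2 = z.2 ∧ x1 ≠ z.1 then qZ p q x1 z.1 else 0) +
  (if x1 = z.1 ∧ x2 ≠ z.2 then qZ p q x2 z.2 else 0)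

open Classical in
noncomputable def FT (p q : ℝ) (s : ℕ) (x1 x2 : ℤ) (z : ℤ×ℤ) : ℝ≥0∞ :=
  if z.1 ≠ z.2 ∧ (z.1 - z.2).natAbs ≤ s then Gf p q x1 x2 z else 0

open Classical in
noncomputable def FN (p q : ℝ) (s : ℕ) (x1 x2 : ℤ) (l' : ℕ) (z : ℤ×ℤ) : ℝ≥0∞ :=
  if (z.1 ≠ z.2 ∧ (z.1 - z.2).natAbs ≤ s) ∧ (z.1 - z.2).natAbs = l'
  then Gf p q x1 x2 z else 0

lemma Gf_eval1 (p q : ℝ) (x1 x2 : ℤ) : Gf p q x1 x2 (x1+1, x2) = ENNReal.ofReal p := by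
  unfold Gf qZ
  rw [if_pos ⟨rfl, show x1 ≠ x1+1 by omega⟩, if_neg (show ¬(x1 = x1+1 ∧ x2 ≠ x2) by omega),
    add_zero, if_pos rfl]

lemma Gf_eval2 (p q : ℝ) (x1 x2 : ℤ) : Gf p q x1 x2 (x1-1, x2) = ENNReal.ofReal q := by
  unfold Gf qZ
  rw [if_pos ⟨rfl, show x1 ≠ x1-1 by omega⟩, if_neg (show ¬(x1 = x1-1 ∧ x2 ≠ x2) by omega),
    add_zero, if_neg (show ¬(x1-1 = x1+1) by omega), if_pos rfl]

lemma Gf_eval3 (p q : ℝ) (x1 x2 : ℤ) : Gf p q x1 x2 (x1, x2+1) = ENNReal.ofReal p := by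
  unfold Gf qZ
  rw [if_neg (show ¬(x2 = x2+1 ∧ x1 ≠ x1) by omega), if_pos ⟨rfl, show x2 ≠ x2+1 by omega⟩,
    zero_add, if_pos rfl]

lemma Gf_eval4 (p q : ℝ) (x1 x2 : ℤ) : Gf p q x1 x2 (x1, x2-1) = ENNReal.ofReal q := by
  unfold Gf qZ
  rw [if_neg (show ¬(x2 = x2-1 ∧ x1 ≠ x1) by omega), if_pos ⟨rfl, show x2 ≠ x2-1 by omega⟩,
    zero_add, if_neg (show ¬(x2-1 = x2+1) by omega), if_pos rfl]


set_option maxHeartbeats 1000000 in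
lemma HN_eq (s n l' : ℕ) (x1 x2 : ℤ) (P Q : ℝ≥0∞) (hne : x1 ≠ x2) (hn : n = (x1 - x2).natAbs) (hs : 2 ≤ s) (hns : n ≤ s) :
    ((if (x1+1 ≠ x2 ∧ (x1+1-x2).natAbs ≤ s) ∧ (x1+1-x2).natAbs = l' then P else 0)
     + (if (x1-1 ≠ x2 ∧ (x1-1-x2).natAbs ≤ s) ∧ (x1-1-x2).natAbs = l' then Q else 0)
     + (if (x1 ≠ x2+1 ∧ (x1-(x2+1)).natAbs ≤ s) ∧ (x1-(x2+1)).natAbs = l' then P else 0)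
     + (if (x1 ≠ x2-1 ∧ (x1-(x2-1)).natAbs ≤ s) ∧ (x1-(x2-1)).natAbs = l' then Q else 0))
    = (if n+1 ≤ s ∧ l' = n+1 then P+Q else 0) + (if 2 ≤ n ∧ l' = n-1 then P+Q else 0) := by
  rcases lt_or_gt_of_ne hne with h | h
  · have e1 : (x1+1-x2).natAbs = n-1 := by omega
    have e2 : (x1-1-x2).natAbs = n+1 := by omega
    have e3 : (x1-(x2+1)).natAbs = n+1 := by omega
    have e4 : (x1-(x2-1)).natAbs = n-1 := by omega
    simp only [e1, e2, e3, e4]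
    have c1 : ((x1+1 ≠ x2 ∧ n-1 ≤ s) ∧ n-1 = l') ↔ (2 ≤ n ∧ l' = n-1) := by omega
    have c2 : ((x1-1 ≠ x2 ∧ n+1 ≤ s) ∧ n+1 = l') ↔ (n+1 ≤ s ∧ l' = n+1) := by omega
    have c3 : ((x1 ≠ x2+1 ∧ n+1 ≤ s) ∧ n+1 = l') ↔ (n+1 ≤ s ∧ l' = n+1) := by omega
    have c4 : ((x1 ≠ x2-1 ∧ n-1 ≤ s) ∧ n-1 = l') ↔ (2 ≤ n ∧ l' = n-1) := by omega
    simp only [c1, c2, c3, c4]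
    split_ifs <;> first | (exfalso; omega) | abel
  · have e1 : (x1+1-x2).natAbs = n+1 := by omega
    have e2 : (x1-1-x2).natAbs = n-1 := by omega
    have e3 : (x1-(x2+1)).natAbs = n-1 := by omega
    have e4 : (x1-(x2-1)).natAbs = n+1 := by omega
    simp only [e1, e2, e3, e4]
    have c1 : ((x1+1 ≠ x2 ∧ n+1 ≤ s) ∧ n+1 = l') ↔ (n+1 ≤ s ∧ l' = n+1) := by omega
    have c2 : ((x1-1 ≠ x2 ∧ n-1 ≤ s) ∧ n-1 = l') ↔ (2 ≤ n ∧ l' = n-1) := by omega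
    have c3 : ((x1 ≠ x2+1 ∧ n-1 ≤ s) ∧ n-1 = l') ↔ (2 ≤ n ∧ l' = n-1) := by omega
    have c4 : ((x1 ≠ x2-1 ∧ n+1 ≤ s) ∧ n+1 = l') ↔ (n+1 ≤ s ∧ l' = n+1) := by omega
    simp only [c1, c2, c3, c4]
    split_ifs <;> first | (exfalso; omega) | abel

set_option maxHeartbeats 1000000 in
lemma HT_eq (s n : ℕ) (x1 x2 : ℤ) (P Q : ℝ≥0∞) (hne : x1 ≠ x2) (hn : n = (x1 - x2).natAbs) (hs : 2 ≤ s) (hns : n ≤ s) :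
    ((if x1+1 ≠ x2 ∧ (x1+1-x2).natAbs ≤ s then P else 0)
     + (if x1-1 ≠ x2 ∧ (x1-1-x2).natAbs ≤ s then Q else 0)
     + (if x1 ≠ x2+1 ∧ (x1-(x2+1)).natAbs ≤ s then P else 0)
     + (if x1 ≠ x2-1 ∧ (x1-(x2-1)).natAbs ≤ s then Q else 0))
    = (if n+1 ≤ s then P+Q else 0) + (if 2 ≤ n then P+Q else 0) := by
  rcases lt_or_gt_of_ne hne with h | h
  · have e1 : (x1+1-x2).natAbs = n-1 := by omega
    have e2 : (x1-1-x2).natAbs = n+1 := by omega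
    have e3 : (x1-(x2+1)).natAbs = n+1 := by omega
    have e4 : (x1-(x2-1)).natAbs = n-1 := by omega
    simp only [e1, e2, e3, e4]
    have c1 : (x1+1 ≠ x2 ∧ n-1 ≤ s) ↔ (2 ≤ n) := by omega
    have c2 : (x1-1 ≠ x2 ∧ n+1 ≤ s) ↔ (n+1 ≤ s) := by omega
    have c3 : (x1 ≠ x2+1 ∧ n+1 ≤ s) ↔ (n+1 ≤ s) := by omega
    have c4 : (x1 ≠ x2-1 ∧ n-1 ≤ s) ↔ (2 ≤ n) := by omega
    simp only [c1, c2, c3, c4]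
    split_ifs <;> first | (exfalso; omega) | abel
  · have e1 : (x1+1-x2).natAbs = n+1 := by omega
    have e2 : (x1-1-x2).natAbs = n-1 := by omega
    have e3 : (x1-(x2+1)).natAbs = n-1 := by omega
    have e4 : (x1-(x2-1)).natAbs = n+1 := by omega
    simp only [e1, e2, e3, e4]
    have c1 : (x1+1 ≠ x2 ∧ n+1 ≤ s) ↔ (n+1 ≤ s) := by omega
    have c2 : (x1-1 ≠ x2 ∧ n-1 ≤ s) ↔ (2 ≤ n) := by omega
    have c3 : (x1 ≠ x2+1 ∧ n-1 ≤ s) ↔ (2 ≤ n) := by omega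
    have c4 : (x1 ≠ x2-1 ∧ n+1 ≤ s) ↔ (n+1 ≤ s) := by omega
    simp only [c1, c2, c3, c4]
    split_ifs <;> first | (exfalso; omega) | abel

set_option maxHeartbeats 800000 in
lemma lump (p q : ℝ) (hp : 0 < p) (hq : 0 < q) (s : ℕ) (hs : 2 ≤ s) (c : Sp s) (l' : ℕ) :
    (∑' d : Sp s, if legDist d = l' then jumpChain (spRate p q) c d else 0)
      = ENNReal.ofReal (reflK s (legDist c) l') := by
  obtain ⟨⟨x1, x2⟩, hv⟩ := c
  obtain ⟨hne, hle⟩ := hv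
  have hne' : x1 ≠ x2 := hne
  set n := (x1 - x2).natAbs with hn
  have hn1 : 1 ≤ n := by omega
  have hns : n ≤ s := hle
  set P := ENNReal.ofReal p with hP
  set Q := ENNReal.ofReal q with hQ
  have hP0 : P ≠ 0 := by simp [hP, hp.le, ENNReal.ofReal_eq_zero]; linarith
  have hQ0 : Q ≠ 0 := by simp [hQ, hq.le, ENNReal.ofReal_eq_zero]; linarith
  have hPt : P ≠ ⊤ := ENNReal.ofReal_ne_top
  have hQt : Q ≠ ⊤ := ENNReal.ofReal_ne_top
  have hvv : ((x1, x2) : ℤ×ℤ).1 ≠ ((x1, x2) : ℤ×ℤ).2 ∧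
      (((x1, x2) : ℤ×ℤ).1 - ((x1, x2) : ℤ×ℤ).2).natAbs ≤ s := ⟨hne, hle⟩
  -- total rate
  have hFT0 : ∀ z : ℤ×ℤ, ¬(z.1 ≠ z.2 ∧ (z.1-z.2).natAbs ≤ s) → FT p q s x1 x2 z = 0 := by
    intro z hz; unfold FT; rw [if_neg hz]
  have hFTs : ∀ z, z ∉ ({(x1+1,x2),(x1-1,x2),(x1,x2+1),(x1,x2-1)} : Finset (ℤ×ℤ)) →
      FT p q s x1 x2 z = 0 := by
    intro z hz; unfold FT
    split_ifs with h
    · exact G_support p q x1 x2 z hz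
    · rfl
  have hFN0 : ∀ z : ℤ×ℤ, ¬(z.1 ≠ z.2 ∧ (z.1-z.2).natAbs ≤ s) → FN p q s x1 x2 l' z = 0 := by
    intro z hz; unfold FN; rw [if_neg (fun h => hz h.1)]
  have hFNs : ∀ z, z ∉ ({(x1+1,x2),(x1-1,x2),(x1,x2+1),(x1,x2-1)} : Finset (ℤ×ℤ)) →
      FN p q s x1 x2 l' z = 0 := by
    intro z hz; unfold FN
    split_ifs with h
    · exact G_support p q x1 x2 z hz
    · rfl
  have hTsum : (∑' z : Sp s, spRate p q ⟨(x1,x2), hvv⟩ z)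
      = FT p q s x1 x2 (x1+1,x2) + FT p q s x1 x2 (x1-1,x2)
        + FT p q s x1 x2 (x1,x2+1) + FT p q s x1 x2 (x1,x2-1) := by
    rw [tsum_congr (fun d => show spRate p q ⟨(x1,x2), hvv⟩ d = FT p q s x1 x2 d.1 by
      unfold FT; rw [if_pos d.2]; rfl)]
    exact tsum_four s x1 x2 _ hFTs hFT0
  have hNsum : (∑' d : Sp s, if legDist d = l' then spRate p q ⟨(x1,x2), hvv⟩ d else 0)
      = FN p q s x1 x2 l' (x1+1,x2) + FN p q s x1 x2 l' (x1-1,x2)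
        + FN p q s x1 x2 l' (x1,x2+1) + FN p q s x1 x2 l' (x1,x2-1) := by
    rw [tsum_congr (fun d =>
      show (if legDist d = l' then spRate p q ⟨(x1,x2), hvv⟩ d else 0) = FN p q s x1 x2 l' d.1 by
        unfold FN
        by_cases h : legDist d = l'
        · rw [if_pos h, if_pos ⟨d.2, h⟩]; rfl
        · rw [if_neg h, if_neg (fun hc => h hc.2)])]
    exact tsum_four s x1 x2 _ hFNs hFN0
  -- reduce goal to N / T
  have hgoal : (∑' d : Sp s, if legDist d = l' then jumpChain (spRate p q) ⟨(x1,x2), hvv⟩ d else 0)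
      = (∑' d : Sp s, if legDist d = l' then spRate p q ⟨(x1,x2), hvv⟩ d else 0)
        / (∑' z : Sp s, spRate p q ⟨(x1,x2), hvv⟩ z) := by
    rw [div_eq_mul_inv, ← ENNReal.tsum_mul_right]
    refine tsum_congr (fun d => ?_)
    unfold jumpChain
    by_cases h : legDist d = l'
    · rw [if_pos h, if_pos h, div_eq_mul_inv]
    · rw [if_neg h, if_neg h, zero_mul]
  show (∑' d : Sp s, if legDist d = l' then jumpChain (spRate p q) ⟨(x1,x2), hvv⟩ d else 0)
      = ENNReal.ofReal (reflK s n l')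
  rw [hgoal, hNsum, hTsum]
  unfold FN FT
  rw [Gf_eval1, Gf_eval2, Gf_eval3, Gf_eval4]
  show ((if (x1+1 ≠ x2 ∧ (x1+1-x2).natAbs ≤ s) ∧ (x1+1-x2).natAbs = l' then ENNReal.ofReal p else 0)
     + (if (x1-1 ≠ x2 ∧ (x1-1-x2).natAbs ≤ s) ∧ (x1-1-x2).natAbs = l' then ENNReal.ofReal q else 0)
     + (if (x1 ≠ x2+1 ∧ (x1-(x2+1)).natAbs ≤ s) ∧ (x1-(x2+1)).natAbs = l' then ENNReal.ofReal p else 0)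
     + (if (x1 ≠ x2-1 ∧ (x1-(x2-1)).natAbs ≤ s) ∧ (x1-(x2-1)).natAbs = l' then ENNReal.ofReal q else 0))
    / ((if x1+1 ≠ x2 ∧ (x1+1-x2).natAbs ≤ s then ENNReal.ofReal p else 0)
     + (if x1-1 ≠ x2 ∧ (x1-1-x2).natAbs ≤ s then ENNReal.ofReal q else 0)
     + (if x1 ≠ x2+1 ∧ (x1-(x2+1)).natAbs ≤ s then ENNReal.ofReal p else 0)
     + (if x1 ≠ x2-1 ∧ (x1-(x2-1)).natAbs ≤ s then ENNReal.ofReal q else 0))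
    = ENNReal.ofReal (reflK s n l')
  rw [HN_eq s n l' x1 x2 _ _ hne' hn hs hns, HT_eq s n x1 x2 _ _ hne' hn hs hns]
  exact key P Q hP0 hPt hQ0 hQt s n l' hn1 hns hs

lemma reflK_one_eq (s j : ℕ) (h : j = 2) : reflK s 1 j = 1 := by
  unfold reflK; rw [if_pos rfl, if_pos h]
lemma reflK_one_ne (s j : ℕ) (h : j ≠ 2) : reflK s 1 j = 0 := by
  unfold reflK; rw [if_pos rfl, if_neg h]
lemma reflK_top_eq (s j : ℕ) (hs : 2 ≤ s) (h : j = s - 1) : reflK s s j = 1 := by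
  unfold reflK; rw [if_neg (by omega), if_pos rfl, if_pos h]
lemma reflK_top_ne (s j : ℕ) (hs : 2 ≤ s) (h : j ≠ s - 1) : reflK s s j = 0 := by
  unfold reflK; rw [if_neg (by omega), if_pos rfl, if_neg h]
lemma reflK_mid_eq (s i j : ℕ) (h1 : 1 < i) (h2 : i < s) (h : j = i + 1 ∨ j = i - 1) :
    reflK s i j = 1 / 2 := by
  unfold reflK; rw [if_neg (by omega), if_neg (by omega), if_pos ⟨h1, h2⟩, if_pos h]
lemma reflK_mid_ne (s i j : ℕ) (h1 : 1 < i) (h2 : i < s) (h : ¬(j = i + 1 ∨ j = i - 1)) :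
    reflK s i j = 0 := by
  unfold reflK; rw [if_neg (by omega), if_neg (by omega), if_pos ⟨h1, h2⟩, if_neg h]
lemma reflK_out (s i j : ℕ) (hs : 2 ≤ s) (h : i = 0 ∨ s < i) : reflK s i j = 0 := by
  unfold reflK; rw [if_neg (by omega), if_neg (by omega), if_neg (by omega)]
lemma piDist_bdry (s i : ℕ) (h : i = 1 ∨ i = s) : piDist s i = 1 / (2 * (s:ℝ) - 2) := by
  unfold piDist; rw [if_pos h]
lemma piDist_mid (s i : ℕ) (h1 : 1 < i) (h2 : i < s) : piDist s i = 1 / ((s:ℝ) - 1) := by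
  unfold piDist; rw [if_neg (by omega), if_pos ⟨h1, h2⟩]
lemma piDist_out (s i : ℕ) (hs : 2 ≤ s) (h : i = 0 ∨ s < i) : piDist s i = 0 := by
  unfold piDist; rw [if_neg (by omega), if_neg (by omega)]

lemma sum_reduce (s : ℕ) (hs : 2 ≤ s) (π : ℕ → ℝ) (j : ℕ) (hj1 : 1 ≤ j) (hjs : j ≤ s) :
    ∑ i ∈ Finset.range (s+1), π i * reflK s i j
      = π (j-1) * reflK s (j-1) j + π (j+1) * reflK s (j+1) j := by
  have hterm : ∀ i, π i * reflK s i j =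
      (if i = j-1 then π (j-1) * reflK s (j-1) j else 0) +
      (if i = j+1 then π (j+1) * reflK s (j+1) j else 0) := by
    intro i
    by_cases h1 : i = j - 1
    · subst h1
      have : ¬ (j - 1 = j + 1) := by omega
      simp [this]
    · by_cases h2 : i = j + 1
      · subst h2
        simp [h1]
      · simp only [if_neg h1, if_neg h2, add_zero]
        have : reflK s i j = 0 := by
          unfold reflK
          split_ifs <;> first | rfl | (exfalso; omega)
        rw [this, mul_zero]
  rw [Finset.sum_congr rfl (fun i _ => hterm i), Finset.sum_add_distrib,
    Finset.sum_ite_eq', Finset.sum_ite_eq']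
  have h1 : j - 1 ∈ Finset.range (s+1) := by simp; omega
  rw [if_pos h1]
  by_cases h2 : j + 1 ∈ Finset.range (s+1)
  · rw [if_pos h2]
  · rw [if_neg h2]
    have hj : s < j + 1 := by simp at h2; omega
    rw [reflK_out s (j+1) j hs (Or.inr hj), mul_zero]

lemma piDist_stat (s : ℕ) (hs : 2 ≤ s) (j : ℕ) (hj1 : 1 ≤ j) (hjs : j ≤ s) :
    ∑ i ∈ Finset.range (s + 1), piDist s i * reflK s i j = piDist s j := by
  have h2 : (2:ℝ) ≤ s := by exact_mod_cast hs
  have hne1 : (s:ℝ) - 1 ≠ 0 := by linarith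
  have hne2 : 2 * (s:ℝ) - 2 ≠ 0 := by linarith
  rw [sum_reduce s hs _ j hj1 hjs]
  -- each of the two terms evaluates nicely
  rcases eq_or_lt_of_le hj1 with hj1' | hj1'
  · -- j = 1
    rw [← hj1']
    rw [piDist_out s 0 hs (Or.inl rfl), zero_mul, zero_add]
    rcases eq_or_lt_of_le hs with hs2 | hs3
    · rw [show (1+1 : ℕ) = s by omega, reflK_top_eq s 1 hs (by omega),
        piDist_bdry s s (Or.inr rfl), piDist_bdry s 1 (Or.inl rfl), mul_one]
    · rw [reflK_mid_eq s 2 1 (by omega) hs3 (by omega), piDist_mid s 2 (by omega) hs3,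
        piDist_bdry s 1 (Or.inl rfl)]
      field_simp
  · -- 1 < j
    rcases eq_or_lt_of_le hjs with hjs' | hjs'
    · -- j = s
      subst hjs'
      rw [piDist_out j (j+1) hs (Or.inr (by omega)), zero_mul, add_zero,
        piDist_bdry j j (Or.inr rfl)]
      rcases eq_or_lt_of_le hs with hs2 | hs3
      · rw [show j - 1 = 1 by omega, reflK_one_eq j j (by omega),
          piDist_bdry j 1 (Or.inl rfl), mul_one]
      · rw [reflK_mid_eq j (j-1) j (by omega) (by omega) (by omega),
          piDist_mid j (j-1) (by omega) (by omega)]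
        field_simp
    · -- 1 < j < s
      have e1 : piDist s (j-1) * reflK s (j-1) j = 1 / (2 * (s:ℝ) - 2) := by
        by_cases hj2 : j = 2
        · rw [show j - 1 = 1 by omega, reflK_one_eq s j hj2,
            piDist_bdry s 1 (Or.inl rfl), mul_one]
        · rw [reflK_mid_eq s (j-1) j (by omega) (by omega) (by omega),
            piDist_mid s (j-1) (by omega) (by omega)]
          field_simp
      have e2 : piDist s (j+1) * reflK s (j+1) j = 1 / (2 * (s:ℝ) - 2) := by
        rcases eq_or_lt_of_le (show j + 1 ≤ s by omega) with hjs2 | hjs3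
        · rw [hjs2, reflK_top_eq s j hs (by omega), piDist_bdry s s (Or.inr rfl), mul_one]
        · rw [reflK_mid_eq s (j+1) j (by omega) (by omega) (by omega),
            piDist_mid s (j+1) (by omega) (by omega)]
          field_simp
      rw [e1, e2, piDist_mid s j hj1' hjs']
      field_simp
      ring

lemma piDist_uniq (s : ℕ) (hs : 2 ≤ s) (π : ℕ → ℝ)
    (hsupp : ∀ i, (i = 0 ∨ s < i) → π i = 0)
    (hsum : ∑ i ∈ Finset.range (s + 1), π i = 1)
    (hstat : ∀ j : ℕ, 1 ≤ j → j ≤ s →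
      ∑ i ∈ Finset.range (s + 1), π i * reflK s i j = π j) :
    π = piDist s := by
  have h2 : (2:ℝ) ≤ s := by exact_mod_cast hs
  have hne1 : (s:ℝ) - 1 ≠ 0 := by linarith
  have hne2 : 2 * (s:ℝ) - 2 ≠ 0 := by linarith
  have eqat : ∀ j, 1 ≤ j → j ≤ s →
      π (j-1) * reflK s (j-1) j + π (j+1) * reflK s (j+1) j = π j := by
    intro j ha hb
    rw [← sum_reduce s hs π j ha hb]
    exact hstat j ha hb
  have key : ∀ j, 2 ≤ j → j < s → π j = 2 * π 1 := by
    intro j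
    induction j using Nat.strong_induction_on with
    | _ j ih =>
      intro h2j hjs
      rcases eq_or_lt_of_le h2j with hj2 | hj3
      · -- j = 2
        have h := eqat 1 le_rfl (by omega)
        rw [hsupp 0 (Or.inl rfl), zero_mul, zero_add,
          reflK_mid_eq s (1+1) 1 (by omega) (by omega) (by omega)] at h
        rw [← hj2] at *
        linarith
      · -- j ≥ 3
        have h := eqat (j-1) (by omega) (by omega)
        rw [show j - 1 - 1 = j - 2 by omega, show j - 1 + 1 = j by omega,
          reflK_mid_eq s j (j-1) (by omega) hjs (by omega)] at h
        have hprev : π (j-1) = 2 * π 1 := ih (j-1) (by omega) (by omega) (by omega)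
        by_cases hj3'' : j = 3
        · rw [show j - 2 = 1 by omega, reflK_one_eq s (j-1) (by omega)] at h
          rw [hprev] at h
          linarith
        · have hp2 : π (j-2) = 2 * π 1 := ih (j-2) (by omega) (by omega) (by omega)
          rw [show j - 2 = j - 2 from rfl,
            reflK_mid_eq s (j-2) (j-1) (by omega) (by omega) (by omega), hp2, hprev] at h
          linarith
  have keyS : π s = π 1 := by
    rcases eq_or_lt_of_le hs with hs2 | hs3
    · have h := eqat 1 le_rfl (by omega)
      rw [hsupp 0 (Or.inl rfl), zero_mul, zero_add, show (1+1 : ℕ) = s by omega,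
        reflK_top_eq s 1 hs (by omega), mul_one] at h
      exact h
    · have h := eqat (s-1) (by omega) (by omega)
      rw [show s - 1 - 1 = s - 2 by omega, show s - 1 + 1 = s by omega,
        reflK_top_eq s (s-1) hs rfl, mul_one] at h
      have hprev : π (s-1) = 2 * π 1 := key (s-1) (by omega) (by omega)
      by_cases hs3'' : s = 3
      · rw [show s - 2 = 1 by omega, reflK_one_eq s (s-1) (by omega), mul_one, hprev] at h
        linarith
      · have hp2 : π (s-2) = 2 * π 1 := key (s-2) (by omega) (by omega)
        rw [reflK_mid_eq s (s-2) (s-1) (by omega) (by omega) (by omega), hp2, hprev] at h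
        linarith
  have hsum2 : (2 * (s:ℝ) - 2) * π 1 = 1 := by
    rw [Finset.range_eq_Ico, ← Finset.sum_Ico_consecutive (fun i => π i)
        (by omega : 0 ≤ 2) (by omega : 2 ≤ s+1),
      Finset.sum_Ico_succ_top (by omega : 2 ≤ s) (fun i => π i)] at hsum
    have hlow : ∑ i ∈ Finset.Ico 0 2, π i = π 0 + π 1 := by
      rw [show (2:ℕ) = 1 + 1 from rfl, Finset.sum_Ico_succ_top (by omega),
        Finset.sum_Ico_succ_top (by omega)]
      simp
    have hmid : ∑ i ∈ Finset.Ico 2 s, π i = (s - 2 : ℕ) * (2 * π 1) := by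
      rw [Finset.sum_congr rfl (fun i hi => ?_), Finset.sum_const, Nat.card_Ico, nsmul_eq_mul]
      · simp only [Finset.mem_Ico] at hi
        exact key i hi.1 hi.2
    rw [hlow, hmid, hsupp 0 (Or.inl rfl), keyS] at hsum
    have hc : ((s - 2 : ℕ) : ℝ) = (s:ℝ) - 2 := by
      have := Nat.cast_sub hs (R := ℝ); simpa using this
    rw [hc] at hsum
    linarith
  have hpi1 : π 1 = 1 / (2 * (s:ℝ) - 2) := by
    field_simp
    linarith
  funext i
  by_cases hi0 : i = 0
  · rw [hi0, hsupp 0 (Or.inl rfl), piDist_out s 0 hs (Or.inl rfl)]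
  by_cases hi1 : i = 1
  · rw [hi1, piDist_bdry s 1 (Or.inl rfl), hpi1]
  by_cases his : i = s
  · rw [his, piDist_bdry s s (Or.inr rfl), keyS, hpi1]
  by_cases hgt : s < i
  · rw [hsupp i (Or.inr hgt), piDist_out s i hs (Or.inr hgt)]
  · have hmid : 1 < i ∧ i < s := by omega
    rw [key i (by omega) hmid.2, piDist_mid s i hmid.1 hmid.2, hpi1]
    field_simp

lemma piDist_nonneg (s : ℕ) (hs : 2 ≤ s) (i : ℕ) : 0 ≤ piDist s i := by
  have h2 : (2:ℝ) ≤ s := by exact_mod_cast hs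
  unfold piDist
  split_ifs with h1 h2'
  · apply div_nonneg zero_le_one; linarith
  · apply div_nonneg zero_le_one; linarith
  · exact le_rfl

lemma piDist_sum (s : ℕ) (hs : 2 ≤ s) :
    ∑ i ∈ Finset.range (s + 1), piDist s i = 1 := by
  have h2 : (2:ℝ) ≤ s := by exact_mod_cast hs
  have hrange : Finset.range (s+1) = Finset.Ico 0 (s+1) := by
    rw [Finset.range_eq_Ico]
  rw [hrange, ← Finset.sum_Ico_consecutive (fun i => piDist s i) (by omega : 0 ≤ 2) (by omega : 2 ≤ s+1),
    Finset.sum_Ico_succ_top (by omega : 2 ≤ s) (fun i => piDist s i)]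
  have h0 : piDist s 0 = 0 := piDist_out s 0 hs (Or.inl rfl)
  have h1 : piDist s 1 = 1 / (2 * (s:ℝ) - 2) := by unfold piDist; rw [if_pos (Or.inl rfl)]
  have hsv : piDist s s = 1 / (2 * (s:ℝ) - 2) := by unfold piDist; rw [if_pos (Or.inr rfl)]
  have hmid : ∑ i ∈ Finset.Ico 2 s, piDist s i = (s - 2 : ℕ) * (1 / ((s:ℝ) - 1)) := by
    rw [Finset.sum_congr rfl (fun i hi => ?_), Finset.sum_const, Nat.card_Ico, nsmul_eq_mul]
    · simp only [Finset.mem_Ico] at hi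
      unfold piDist
      rw [if_neg (by omega), if_pos (by omega)]
  rw [hmid]
  have hlow : ∑ i ∈ Finset.Ico 0 2, piDist s i = piDist s 0 + piDist s 1 := by
    rw [show (2:ℕ) = 1 + 1 from rfl, Finset.sum_Ico_succ_top (by omega),
      Finset.sum_Ico_succ_top (by omega)]
    simp
  rw [hlow, h0, h1, hsv]
  have hc : ((s - 2 : ℕ) : ℝ) = (s:ℝ) - 2 := by
    have := Nat.cast_sub hs (R := ℝ); simpa using this
  rw [hc]
  have hne1 : (s:ℝ) - 1 ≠ 0 := by linarith
  have hne2 : 2 * (s:ℝ) - 2 ≠ 0 := by linarith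
  field_simp
  ring

theorem spider_leg_distance_reflected_walk
    (p q : ℝ) (hp : 0 < p) (hq : 0 < q) (s : ℕ) (hs : 2 ≤ s) :
    -- the leg-distance process under the jump chain of the spider is a Markov
    -- chain on {1,…,s} with kernel `reflK s` (lumpability):
    (∀ c : Sp s, ∀ l' : ℕ,
      (∑' d : Sp s, if legDist d = l' then jumpChain (spRate p q) c d else 0)
        = ENNReal.ofReal (reflK s (legDist c) l')) ∧
    -- `piDist s` is a stationary distribution for `reflK s`:
    (∀ i : ℕ, 0 ≤ piDist s i) ∧
    (∑ i ∈ Finset.range (s + 1), piDist s i = 1) ∧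
    (∀ j : ℕ, 1 ≤ j → j ≤ s →
      ∑ i ∈ Finset.range (s + 1), piDist s i * reflK s i j = piDist s j) ∧
    -- and it is the unique such stationary distribution:
    (∀ π : ℕ → ℝ, (∀ i, 0 ≤ π i) → (∀ i, (i = 0 ∨ s < i) → π i = 0) →
      (∑ i ∈ Finset.range (s + 1), π i = 1) →
      (∀ j : ℕ, 1 ≤ j → j ≤ s →
        ∑ i ∈ Finset.range (s + 1), π i * reflK s i j = π j) →
      π = piDist s) := by
  exact ⟨fun c l' => lump p q hp hq s hs c l',
    fun i => piDist_nonneg s hs i,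
    piDist_sum s hs,
    fun j h1 h2 => piDist_stat s hs j h1 h2,
    fun π _ hsupp hsum hstat => piDist_uniq s hs π hsupp hsum hstat⟩
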